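/- For every k ≥ 1 there exists a graph of order 4k + 1 whose Seidel matrix S is singular with one-dimensional nullspace, such that the primitive integer nullspace vector φ has maximum entry 5^{k-1} and sum of entries 5^k. In particular, for k ≥ 2 the nullspace of S contains no vector with all entries ±1. -/

import Mathlib

open Matrix Finset

/-- block index of vertex `v`: 0 for the pentagon `0..4`, `m` for `4m+1..4m+4`. -/
def blkN (v : ℕ) : ℕ := (v - 1) / 4

def phiN (v : ℕ) : ℤ := 5 ^ blkN v

/-- adjacency for `a < b`. -/
def coreAdj (a b : ℕ) : Prop :=
  (b ≤ 4 ∧ (b - a = 1 ∨ b - a = 4)) ∨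
  (4 < b ∧ (a - 1) / 4 = (b - 1) / 4 ∧ b - a = 1) ∨
  (4 < b ∧ (a - 1) / 4 ≠ (b - 1) / 4 ∧ ((b - 1) % 4 = 0 ∨ (b - 1) % 4 = 3))

def adjN (u v : ℕ) : Prop := (u < v ∧ coreAdj u v) ∨ (v < u ∧ coreAdj v u)

instance : DecidablePred (blkN ·= 0) := by unfold blkN; infer_instance
instance coreAdj.dec : ∀ a b, Decidable (coreAdj a b) := by unfold coreAdj; infer_instance
instance adjN.dec : ∀ a b, Decidable (adjN a b) := by unfold adjN; infer_instance

lemma adjN_symm {u v : ℕ} (h : adjN u v) : adjN v u := by unfold adjN at *; tauto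

lemma adjN_irrefl (u : ℕ) : ¬ adjN u u := by unfold adjN; omega

def myGraph (n : ℕ) : SimpleGraph (Fin n) where
  Adj i j := adjN i.val j.val
  symm := ⟨fun i j h => adjN_symm h⟩
  loopless := ⟨fun i h => adjN_irrefl i.val h⟩

instance myGraph.decRel (n : ℕ) : DecidableRel (myGraph n).Adj :=
  fun i j => adjN.dec i.val j.val

lemma phiN_new (k j : ℕ) (h1 : 1 ≤ j) (h4 : j ≤ 4) : phiN (4 * k + j) = 5 ^ k := by
  unfold phiN blkN
  congr 1
  omega

lemma sum_phi : ∀ k, 1 ≤ k → ∑ v ∈ Finset.range (4 * k + 1), phiN v = 5 ^ k := by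
  intro k hk
  induction k with
  | zero => omega
  | succ m ih =>
    rcases Nat.eq_or_lt_of_le hk with h | h
    · simp only [← h]
      decide
    · have hm : 1 ≤ m := by omega
      have e : 4 * (m + 1) + 1 = (((4 * m + 1) + 1) + 1) + 1 + 1 := by ring
      rw [e, Finset.sum_range_succ, Finset.sum_range_succ, Finset.sum_range_succ,
        Finset.sum_range_succ, ih hm]
      have p1 := phiN_new m 1 (by omega) (by omega)
      have p2 := phiN_new m 2 (by omega) (by omega)
      have p3 := phiN_new m 3 (by omega) (by omega)
      have p4 := phiN_new m 4 (by omega) (by omega)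
      have e1 : 4 * m + 1 + 1 = 4 * m + 2 := by ring
      have e2 : 4 * m + 1 + 1 + 1 = 4 * m + 3 := by ring
      have e3 : 4 * m + 1 + 1 + 1 + 1 = 4 * m + 4 := by ring
      rw [e1, e2, e3, p1, p2, p3, p4]
      ring

lemma nbr_eq : ∀ k, 1 ≤ k → ∀ i, i < 4 * k + 1 →
    2 * (∑ v ∈ Finset.range (4 * k + 1), if adjN i v then phiN v else 0)
      = 5 ^ k - phiN i := by
  intro k hk
  induction k, hk using Nat.le_induction with
  | base => intro i hi; interval_cases i <;> decide
  | succ m hm ih =>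
    intro i hi
    have e : 4 * (m + 1) + 1 = (((4 * m + 1) + 1) + 1) + 1 + 1 := by ring
    have e1 : 4 * m + 1 + 1 = 4 * m + 2 := by ring
    have e2 : 4 * m + 1 + 1 + 1 = 4 * m + 3 := by ring
    have e3 : 4 * m + 1 + 1 + 1 + 1 = 4 * m + 4 := by ring
    have p1 := phiN_new m 1 (by omega) (by omega)
    have p2 := phiN_new m 2 (by omega) (by omega)
    have p3 := phiN_new m 3 (by omega) (by omega)
    have p4 := phiN_new m 4 (by omega) (by omega)
    have hpow : (5:ℤ) ^ (m + 1) = 5 * 5 ^ m := by ring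
    rw [e, Finset.sum_range_succ, Finset.sum_range_succ, Finset.sum_range_succ,
      Finset.sum_range_succ, e1, e2, e3]
    rcases Nat.lt_or_ge i (4 * m + 1) with hlt | hge
    · have a1 : adjN i (4 * m + 1) := by unfold adjN coreAdj; omega
      have a2 : ¬ adjN i (4 * m + 2) := by unfold adjN coreAdj; omega
      have a3 : ¬ adjN i (4 * m + 3) := by unfold adjN coreAdj; omega
      have a4 : adjN i (4 * m + 4) := by unfold adjN coreAdj; omega
      rw [if_pos a1, if_neg a2, if_neg a3, if_pos a4, p1, p4]
      have := ih i hlt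
      rw [hpow]; linarith
    · -- i is one of the four new vertices
      have hsum := sum_phi m (by omega)
      have hcase : i = 4*m+1 ∨ i = 4*m+2 ∨ i = 4*m+3 ∨ i = 4*m+4 := by omega
      rcases hcase with rfl | rfl | rfl | rfl
      · have hall : ∀ v ∈ Finset.range (4*m+1), (if adjN (4*m+1) v then phiN v else 0) = phiN v := by
          intro v hv
          rw [Finset.mem_range] at hv
          have : adjN (4*m+1) v := by unfold adjN coreAdj; omega
          rw [if_pos this]
        rw [Finset.sum_congr rfl hall, hsum]
        have a1 : ¬ adjN (4*m+1) (4*m+1) := adjN_irrefl _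
        have a2 : adjN (4*m+1) (4*m+2) := by unfold adjN coreAdj; omega
        have a3 : ¬ adjN (4*m+1) (4*m+3) := by unfold adjN coreAdj; omega
        have a4 : ¬ adjN (4*m+1) (4*m+4) := by unfold adjN coreAdj; omega
        rw [if_neg a1, if_pos a2, if_neg a3, if_neg a4, p1, p2, hpow]; ring
      · have hnone : ∀ v ∈ Finset.range (4*m+1), (if adjN (4*m+2) v then phiN v else 0) = 0 := by
          intro v hv
          rw [Finset.mem_range] at hv
          have : ¬ adjN (4*m+2) v := by unfold adjN coreAdj; omega
          rw [if_neg this]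
        rw [Finset.sum_congr rfl hnone, Finset.sum_const_zero]
        have a1 : adjN (4*m+2) (4*m+1) := by unfold adjN coreAdj; omega
        have a2 : ¬ adjN (4*m+2) (4*m+2) := adjN_irrefl _
        have a3 : adjN (4*m+2) (4*m+3) := by unfold adjN coreAdj; omega
        have a4 : ¬ adjN (4*m+2) (4*m+4) := by unfold adjN coreAdj; omega
        rw [if_pos a1, if_neg a2, if_pos a3, if_neg a4, p1, p2, p3, hpow]; ring
      · have hnone : ∀ v ∈ Finset.range (4*m+1), (if adjN (4*m+3) v then phiN v else 0) = 0 := by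
          intro v hv
          rw [Finset.mem_range] at hv
          have : ¬ adjN (4*m+3) v := by unfold adjN coreAdj; omega
          rw [if_neg this]
        rw [Finset.sum_congr rfl hnone, Finset.sum_const_zero]
        have a1 : ¬ adjN (4*m+3) (4*m+1) := by unfold adjN coreAdj; omega
        have a2 : adjN (4*m+3) (4*m+2) := by unfold adjN coreAdj; omega
        have a3 : ¬ adjN (4*m+3) (4*m+3) := adjN_irrefl _
        have a4 : adjN (4*m+3) (4*m+4) := by unfold adjN coreAdj; omega
        rw [if_neg a1, if_pos a2, if_neg a3, if_pos a4, p2, p3, p4, hpow]; ring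
      · have hall : ∀ v ∈ Finset.range (4*m+1), (if adjN (4*m+4) v then phiN v else 0) = phiN v := by
          intro v hv
          rw [Finset.mem_range] at hv
          have : adjN (4*m+4) v := by unfold adjN coreAdj; omega
          rw [if_pos this]
        rw [Finset.sum_congr rfl hall, hsum]
        have a1 : ¬ adjN (4*m+4) (4*m+1) := by unfold adjN coreAdj; omega
        have a2 : ¬ adjN (4*m+4) (4*m+2) := by unfold adjN coreAdj; omega
        have a3 : adjN (4*m+4) (4*m+3) := by unfold adjN coreAdj; omega
        have a4 : ¬ adjN (4*m+4) (4*m+4) := adjN_irrefl _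
        rw [if_neg a1, if_neg a2, if_pos a3, if_neg a4, p3, p4, hpow]; ring

def seidelMatrix {n : ℕ} (G : SimpleGraph (Fin n)) [DecidableRel G.Adj] :
    Matrix (Fin n) (Fin n) ℤ :=
  Matrix.of fun i j => if i = j then 0 else if G.Adj i j then -1 else 1

lemma mulVec_phi (k : ℕ) (hk : 1 ≤ k) :
    (seidelMatrix (myGraph (4 * k + 1))).mulVec (fun i => phiN i.val) = 0 := by
  funext i
  have expand : (seidelMatrix (myGraph (4 * k + 1))).mulVec (fun i => phiN i.val) i
      = ∑ j : Fin (4 * k + 1),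
          (if i = j then (0:ℤ) else if adjN i.val j.val then -1 else 1) * phiN j.val := by
    simp only [Matrix.mulVec, dotProduct, seidelMatrix, Matrix.of_apply]
    rfl
  rw [Pi.zero_apply, expand]
  have key : ∀ j : Fin (4 * k + 1),
      (if i = j then (0:ℤ) else if adjN i.val j.val then -1 else 1) * phiN j.val
        = phiN j.val - (if j.val = i.val then phiN j.val else 0)
            - 2 * (if adjN i.val j.val then phiN j.val else 0) := by
    intro j
    by_cases h : i = j
    · subst h
      simp [adjN_irrefl]
    · have hv : ¬ (j.val = i.val) := fun hh => h (Fin.ext hh.symm)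
      rw [if_neg h, if_neg hv]
      by_cases ha : adjN i.val j.val
      · rw [if_pos ha, if_pos ha]; ring
      · rw [if_neg ha, if_neg ha]; ring
  rw [Finset.sum_congr rfl (fun j _ => key j)]
  rw [Finset.sum_sub_distrib, Finset.sum_sub_distrib]
  rw [← Finset.mul_sum]
  rw [Fin.sum_univ_eq_sum_range (fun v => phiN v) (4 * k + 1)]
  rw [Fin.sum_univ_eq_sum_range (fun v => if v = i.val then phiN v else 0) (4 * k + 1)]
  rw [Fin.sum_univ_eq_sum_range (fun v => if adjN i.val v then phiN v else 0) (4 * k + 1)]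
  rw [Finset.sum_ite_eq' (Finset.range (4 * k + 1)) i.val phiN,
    if_pos (Finset.mem_range.mpr i.isLt)]
  have h1 := sum_phi k hk
  have h2 := nbr_eq k hk i.val i.isLt
  have : (0:ℤ) = 0 := rfl
  linarith

lemma phiN_zero : phiN 0 = 1 := rfl

lemma ker_mod2 {n : ℕ} (G : SimpleGraph (Fin (n + 1))) [DecidableRel G.Adj]
    (θ : Fin (n + 1) → ℤ)
    (hθ : (seidelMatrix G).mulVec θ = 0) (h0 : θ 0 = 0) :
    θ = 0 := by
  by_contra hne
  set g : ℤ := Finset.univ.gcd θ with hgdef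
  have hg : g ≠ 0 := by
    intro h
    apply hne
    funext i
    rw [Pi.zero_apply]
    exact Finset.gcd_eq_zero_iff.mp h i (Finset.mem_univ i)
  set θ' : Fin (n + 1) → ℤ := fun i => θ i / g with hθ'def
  have hfac : ∀ i, θ i = g * θ' i := fun i =>
    (Int.mul_ediv_cancel' (Finset.gcd_dvd (Finset.mem_univ i))).symm
  have hgt : g • θ' = θ := by
    funext i
    simp only [Pi.smul_apply, smul_eq_mul]
    exact (hfac i).symm
  have hker' : (seidelMatrix G).mulVec θ' = 0 := by
    have h2 : g • (seidelMatrix G).mulVec θ' = 0 := by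
      rw [← Matrix.mulVec_smul, hgt, hθ]
    rcases smul_eq_zero.mp h2 with h | h
    · exact absurd h hg
    · exact h
  have hθ'0 : θ' 0 = 0 := by
    show θ 0 / g = 0
    rw [h0]
    exact Int.zero_ediv g
  have hodd : ∃ i, ¬ (2:ℤ) ∣ θ' i := by
    by_contra hall
    push_neg at hall
    have hdvd : (2 * g) ∣ g := by
      apply Finset.dvd_gcd
      intro i _
      obtain ⟨c, hc⟩ := hall i
      exact ⟨c, by rw [hfac i, hc]; ring⟩
    obtain ⟨c, hc⟩ := hdvd
    have : g * (1 - 2 * c) = 0 := by linear_combination hc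
    rcases mul_eq_zero.mp this with h | h
    · exact hg h
    · omega
  set η : Fin (n + 1) → ZMod 2 := fun i => ((θ' i : ℤ) : ZMod 2) with hηdef
  have hrow : ∀ i, η i = ∑ j, η j := by
    intro i
    have hr : ∑ j, seidelMatrix G i j * θ' j = 0 := by
      have := congrFun hker' i
      simpa [Matrix.mulVec, dotProduct] using this
    have hcast : ∑ j, ((seidelMatrix G i j : ℤ) : ZMod 2) * η j = 0 := by
      have : ((∑ j, seidelMatrix G i j * θ' j : ℤ) : ZMod 2) = 0 := by rw [hr]; rfl
      push_cast at this
      exact this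
    have hSij : ∀ j, ((seidelMatrix G i j : ℤ) : ZMod 2) = if i = j then 0 else 1 := by
      intro j
      simp only [seidelMatrix, Matrix.of_apply]
      by_cases h : i = j
      · rw [if_pos h, if_pos h]; rfl
      · rw [if_neg h, if_neg h]
        by_cases ha : G.Adj i j
        · rw [if_pos ha]; decide
        · rw [if_neg ha]; rfl
    simp only [hSij] at hcast
    have hsplit : ∀ j, (if i = j then (0:ZMod 2) else 1) * η j
        = η j - (if j = i then η j else 0) := by
      intro j
      by_cases h : i = j
      · rw [if_pos h, if_pos h.symm]; simp
      · rw [if_neg h, if_neg (fun hh => h hh.symm)]; simp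
    rw [Finset.sum_congr rfl (fun j _ => hsplit j), Finset.sum_sub_distrib,
      Finset.sum_ite_eq' Finset.univ i η, if_pos (Finset.mem_univ i)] at hcast
    exact (sub_eq_zero.mp hcast).symm
  obtain ⟨i0, hi0⟩ := hodd
  have hη0 : η i0 ≠ 0 := by
    intro h
    exact hi0 ((ZMod.intCast_zmod_eq_zero_iff_dvd (θ' i0) 2).mp h)
  have h3 : η 0 = 0 := by
    simp only [hηdef, hθ'0]
    rfl
  rw [hrow i0, ← hrow 0, h3] at hη0
  exact hη0 rfl

lemma ker_unique (k : ℕ) (hk : 1 ≤ k) (ψ : Fin (4 * k + 1) → ℤ)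
    (hψ : (seidelMatrix (myGraph (4 * k + 1))).mulVec ψ = 0) :
    ψ = ψ 0 • (fun i : Fin (4 * k + 1) => phiN i.val) := by
  set φv : Fin (4 * k + 1) → ℤ := fun i => phiN i.val with hφv
  have hθmul : (seidelMatrix (myGraph (4 * k + 1))).mulVec (ψ - ψ 0 • φv) = 0 := by
    rw [Matrix.mulVec_sub, Matrix.mulVec_smul, hψ, mulVec_phi k hk]
    simp
  have hθ0 : (ψ - ψ 0 • φv) 0 = 0 := by
    have : φv 0 = 1 := by
      show phiN 0 = 1
      decide
    simp [this]
  have := ker_mod2 (n := 4 * k) (myGraph (4 * k + 1)) (ψ - ψ 0 • φv) hθmul hθ0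
  have := sub_eq_zero.mp this
  exact this

theorem exists_graph_unbounded_null_vector (k : ℕ) (hk : 1 ≤ k) :
    ∃ (G : SimpleGraph (Fin (4 * k + 1))) (_ : DecidableRel G.Adj)
      (φ : Fin (4 * k + 1) → ℤ),
      (seidelMatrix G).det = 0 ∧
      (seidelMatrix G).rank = 4 * k ∧
      (seidelMatrix G).mulVec φ = 0 ∧
      Finset.univ.gcd φ = 1 ∧
      (∀ i, φ i ≤ 5 ^ (k - 1)) ∧
      (∃ i, φ i = 5 ^ (k - 1)) ∧
      (∑ i, φ i) = 5 ^ k ∧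
      (2 ≤ k → ¬∃ ψ : Fin (4 * k + 1) → ℤ,
        (∀ i, ψ i = 1 ∨ ψ i = -1) ∧ (seidelMatrix G).mulVec ψ = 0) := by
  set n := 4 * k + 1 with hn
  set φv : Fin (4 * k + 1) → ℤ := fun i => phiN i.val with hφv
  have hφ0 : φv 0 = 1 := by show phiN 0 = 1; decide
  have hφne : φv ≠ 0 := by
    intro h
    have := congrFun h 0
    rw [hφ0, Pi.zero_apply] at this
    exact one_ne_zero this
  have hφ := mulVec_phi k hk
  have hmax : ∀ i : Fin (4 * k + 1), φv i ≤ 5 ^ (k - 1) := by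
    intro i
    have hb : blkN i.val ≤ k - 1 := by
      have := i.isLt
      unfold blkN
      omega
    calc φv i = 5 ^ blkN i.val := rfl
      _ ≤ 5 ^ (k - 1) := pow_le_pow_right₀ (by norm_num) hb
  have hattain' : phiN (4 * (k - 1) + 1) = 5 ^ (k - 1) := by
    unfold phiN blkN
    congr 1
    omega
  have hattain : φv ⟨4 * (k - 1) + 1, by omega⟩ = 5 ^ (k - 1) := hattain'
  refine ⟨myGraph (4 * k + 1), myGraph.decRel _, φv, ?_, ?_, hφ, ?_, hmax,
    ⟨_, hattain⟩, ?_, ?_⟩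
  · exact Matrix.exists_mulVec_eq_zero_iff.mp ⟨φv, hφne, hφ⟩
  · -- rank
    have hker : LinearMap.ker (seidelMatrix (myGraph (4 * k + 1))).mulVecLin
        = Submodule.span ℤ {φv} := by
      apply le_antisymm
      · intro ψ hψ
        rw [LinearMap.mem_ker, Matrix.mulVecLin_apply] at hψ
        rw [Submodule.mem_span_singleton]
        exact ⟨ψ 0, (ker_unique k hk ψ hψ).symm⟩
      · rw [Submodule.span_le, Set.singleton_subset_iff]
        exact LinearMap.mem_ker.mpr (by rw [Matrix.mulVecLin_apply]; exact hφ)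
    have hkerrank : Module.rank ℤ
        (LinearMap.ker (seidelMatrix (myGraph (4 * k + 1))).mulVecLin) = 1 := by
      rw [hker]
      have hli : LinearIndependent ℤ (fun x : ({φv} : Set (Fin (4 * k + 1) → ℤ)) => (x : Fin (4 * k + 1) → ℤ)) := by
        apply linearIndependent_unique_iff.mpr
        simpa using hφne
      rw [rank_span_set hli, Cardinal.mk_singleton]
    have hrn := LinearMap.rank_range_add_rank_ker
      (seidelMatrix (myGraph (4 * k + 1))).mulVecLin
    rw [hkerrank, rank_fin_fun] at hrn
    have hlt : Module.rank ℤ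
        (LinearMap.range (seidelMatrix (myGraph (4 * k + 1))).mulVecLin) < Cardinal.aleph0 := by
      refine lt_of_le_of_lt (self_le_add_right _ 1) ?_
      rw [hrn]
      exact Cardinal.nat_lt_aleph0 _
    obtain ⟨m, hm⟩ := Cardinal.lt_aleph0.mp hlt
    rw [hm] at hrn
    have hm' : m = 4 * k := by
      have h2 : m + 1 = 4 * k + 1 := by exact_mod_cast hrn
      omega
    show Matrix.rank _ = 4 * k
    rw [Matrix.rank]
    exact Module.finrank_eq_of_rank_eq (by rw [hm, hm'])
  · -- gcd
    have hdvd : Finset.univ.gcd φv ∣ 1 := by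
      have := Finset.gcd_dvd (f := φv) (Finset.mem_univ (0 : Fin (4 * k + 1)))
      rwa [hφ0] at this
    rcases Int.isUnit_iff.mp (isUnit_of_dvd_one hdvd) with h | h
    · exact h
    · exfalso
      have hnorm : normalize (Finset.univ.gcd φv) = Finset.univ.gcd φv :=
        Finset.normalize_gcd
      rw [h, Int.normalize_of_nonpos (by norm_num)] at hnorm
      norm_num at hnorm
  · rw [Fin.sum_univ_eq_sum_range (fun v => phiN v) (4 * k + 1)]
    exact sum_phi k hk
  · -- no ±1 null vector for k ≥ 2
    rintro hk2 ⟨ψ, hpm, hker⟩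
    have hu := ker_unique k hk ψ hker
    set i0 : Fin (4 * k + 1) := ⟨4 * (k - 1) + 1, by omega⟩ with hi0
    have hv : ψ i0 = ψ 0 * 5 ^ (k - 1) := by
      rw [congrFun hu i0]
      simp only [Pi.smul_apply, smul_eq_mul]
      rw [hattain']
    have hp5 : (5:ℤ) ^ 1 ≤ 5 ^ (k - 1) := pow_le_pow_right₀ (by norm_num) (by omega)
    rw [pow_one] at hp5
    set p : ℤ := 5 ^ (k - 1) with hp
    rcases hpm i0 with h1 | h1 <;> rcases hpm 0 with h2 | h2 <;>
      rw [h1, h2] at hv <;> omega
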